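/- Let M ≥ 1, θ : Fin M → ℝ, and let π, q : Fin M → ℝ be probability vectors. Define F_π(t) = ∑_a q a · ℓ(σ(t − θ a), ∑_b π b · σ(θ b − θ a)). Then F_π has a unique global minimizer θ′(π) ∈ ℝ, and t ∈ ℝ minimizes F_π if and only if ∑_a q a · σ(t − θ a) = ∑_b ∑_a π b · q a · σ(θ b − θ a) = R(π). -/

import Mathlib

/-- The logistic sigmoid `σ(t) = 1 / (1 + exp (-t))`. -/
noncomputable def sigmoid (t : ℝ) : ℝ := 1 / (1 + Real.exp (-t))

/-- Binary cross-entropy loss `ℓ(p, y) = -(y log p + (1 - y) log (1 - p))`. -/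
noncomputable def bce (p y : ℝ) : ℝ := -(y * Real.log p + (1 - y) * Real.log (1 - p))

/-- A probability vector on `Fin M`. -/
def IsProbVec {M : ℕ} (q : Fin M → ℝ) : Prop := (∀ a, 0 ≤ q a) ∧ ∑ a, q a = 1

lemma one_add_exp_pos (x : ℝ) : 0 < 1 + Real.exp x :=
  by positivity

lemma sigmoid_pos (t : ℝ) : 0 < sigmoid t := by
  unfold sigmoid; positivity

lemma sigmoid_lt_one (t : ℝ) : sigmoid t < 1 := by
  unfold sigmoid
  rw [div_lt_one (one_add_exp_pos _)]
  linarith [Real.exp_pos (-t)]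

lemma sigmoid_strictMono : StrictMono sigmoid := by
  intro s t hst
  unfold sigmoid
  apply div_lt_div_of_pos_left one_pos (one_add_exp_pos _)
  have := Real.exp_lt_exp.2 (neg_lt_neg hst)
  linarith

lemma bce_sigmoid (x y : ℝ) :
    bce (sigmoid x) y = Real.log (1 + Real.exp (-x)) + (1 - y) * x := by
  have h1 : (0:ℝ) < 1 + Real.exp (-x) := one_add_exp_pos _
  have hσ : sigmoid x = 1 / (1 + Real.exp (-x)) := rfl
  have hlog1 : Real.log (sigmoid x) = -Real.log (1 + Real.exp (-x)) := by
    rw [hσ, one_div, Real.log_inv]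
  have h2 : 1 - sigmoid x = Real.exp (-x) / (1 + Real.exp (-x)) := by
    rw [hσ]; field_simp; ring
  have hlog2 : Real.log (1 - sigmoid x) = -x - Real.log (1 + Real.exp (-x)) := by
    rw [h2, Real.log_div (Real.exp_ne_zero _) (ne_of_gt h1), Real.log_exp]
  unfold bce
  rw [hlog1, hlog2]
  ring

lemma hasDerivAt_softplus (c t : ℝ) :
    HasDerivAt (fun t => Real.log (1 + Real.exp (c - t))) (sigmoid (t - c) - 1) t := by
  have h1 : HasDerivAt (fun t : ℝ => c - t) (-1) t := by
    simpa using (hasDerivAt_id t).const_sub c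
  have h2 : HasDerivAt (fun t : ℝ => Real.exp (c - t)) (Real.exp (c - t) * (-1)) t := h1.exp
  have h3 : HasDerivAt (fun t : ℝ => 1 + Real.exp (c - t)) (Real.exp (c - t) * (-1)) t :=
    h2.const_add 1
  have h4 := h3.log (ne_of_gt (one_add_exp_pos _))
  convert h4 using 1
  have : sigmoid (t - c) = 1 / (1 + Real.exp (c - t)) := by
    rw [sigmoid, neg_sub]
  rw [this]
  field_simp
  ring

lemma sigmoid_tendsto_atTop : Filter.Tendsto sigmoid Filter.atTop (nhds 1) := by
  have h : Filter.Tendsto (fun t : ℝ => 1 + Real.exp (-t)) Filter.atTop (nhds (1 + 0)) :=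
    Filter.Tendsto.const_add 1 Real.tendsto_exp_neg_atTop_nhds_zero
  have h2 : Filter.Tendsto (fun t : ℝ => 1 / (1 + Real.exp (-t))) Filter.atTop
      (nhds (1 / (1 + 0))) :=
    Filter.Tendsto.div (tendsto_const_nhds : Filter.Tendsto (fun _ : ℝ => (1:ℝ))
      Filter.atTop (nhds 1)) h (by norm_num)
  have : sigmoid = fun t : ℝ => 1 / (1 + Real.exp (-t)) := rfl
  rw [this]
  simpa using h2

lemma sigmoid_tendsto_atBot : Filter.Tendsto sigmoid Filter.atBot (nhds 0) := by
  have h1 : Filter.Tendsto (fun t : ℝ => Real.exp (-t)) Filter.atBot Filter.atTop :=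
    Real.tendsto_exp_atTop.comp Filter.tendsto_neg_atBot_atTop
  have h2 : Filter.Tendsto (fun t : ℝ => 1 + Real.exp (-t)) Filter.atBot Filter.atTop :=
    Filter.tendsto_atTop_add_const_left _ 1 h1
  have h3 := h2.inv_tendsto_atTop
  have : sigmoid = fun t : ℝ => ((fun t : ℝ => 1 + Real.exp (-t)) t)⁻¹ := by
    funext t; rw [sigmoid, one_div]
  rw [this]
  exact h3

lemma continuous_sigmoid' : Continuous sigmoid := by
  unfold sigmoid
  exact continuous_const.div (continuous_const.add (Real.continuous_exp.comp continuous_neg))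
    (fun x => ne_of_gt (one_add_exp_pos _))

/-- For probability vectors `π, q`, the inner routing objective
`F_π(t) = ∑ a, q a * ℓ(σ(t - θ a), ∑ b, π b * σ(θ b - θ a))` has a unique global minimizer,
and `t` minimizes `F_π` iff `∑ a, q a * σ(t - θ a) = R(π)`, where
`R(π) = ∑ b, ∑ a, π b * q a * σ(θ b - θ a)`. -/
theorem router_bt_coefficient_characterization {M : ℕ} (hM : 1 ≤ M) (θ : Fin M → ℝ)
    (π q : Fin M → ℝ) (hπ : IsProbVec π) (hq : IsProbVec q) :
    (∃! t₀ : ℝ, ∀ t : ℝ,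
        ∑ a, q a * bce (sigmoid (t₀ - θ a)) (∑ b, π b * sigmoid (θ b - θ a))
          ≤ ∑ a, q a * bce (sigmoid (t - θ a)) (∑ b, π b * sigmoid (θ b - θ a))) ∧
    (∀ t : ℝ,
        (∀ s : ℝ,
            ∑ a, q a * bce (sigmoid (t - θ a)) (∑ b, π b * sigmoid (θ b - θ a))
              ≤ ∑ a, q a * bce (sigmoid (s - θ a)) (∑ b, π b * sigmoid (θ b - θ a))) ↔
          ∑ a, q a * sigmoid (t - θ a) = ∑ b, ∑ a, π b * q a * sigmoid (θ b - θ a)) := by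
  obtain ⟨hπ0, hπ1⟩ := hπ
  obtain ⟨hq0, hq1⟩ := hq
  set y : Fin M → ℝ := fun a => ∑ b, π b * sigmoid (θ b - θ a) with hy_def
  set R : ℝ := ∑ a, q a * y a with hR_def
  set F : ℝ → ℝ := fun t => ∑ a, q a * bce (sigmoid (t - θ a)) (y a) with hF_def
  set G : ℝ → ℝ := fun t => ∑ a, q a * sigmoid (t - θ a) with hG_def
  -- the double sum equals R
  have hR_eq : ∑ b, ∑ a, π b * q a * sigmoid (θ b - θ a) = R := by
    rw [hR_def, Finset.sum_comm]
    apply Finset.sum_congr rfl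
    intro a _
    rw [hy_def, Finset.mul_sum]
    apply Finset.sum_congr rfl
    intro b _
    ring
  -- existence of positive coordinates
  obtain ⟨a₀, ha₀⟩ : ∃ a, 0 < q a := by
    by_contra h
    push_neg at h
    have : ∑ a, q a ≤ 0 := Finset.sum_nonpos (fun a _ => h a)
    linarith
  obtain ⟨b₀, hb₀⟩ : ∃ b, 0 < π b := by
    by_contra h
    push_neg at h
    have : ∑ b, π b ≤ 0 := Finset.sum_nonpos (fun b _ => h b)
    linarith
  -- y a ∈ (0,1)
  have hy0 : ∀ a, 0 < y a := by
    intro a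
    apply Finset.sum_pos' (fun b _ => mul_nonneg (hπ0 b) (le_of_lt (sigmoid_pos _)))
    exact ⟨b₀, Finset.mem_univ _, mul_pos hb₀ (sigmoid_pos _)⟩
  have hy1 : ∀ a, y a < 1 := by
    intro a
    calc y a < ∑ b, π b := by
          apply Finset.sum_lt_sum
          · intro b _
            calc π b * sigmoid (θ b - θ a) ≤ π b * 1 :=
                  mul_le_mul_of_nonneg_left (le_of_lt (sigmoid_lt_one _)) (hπ0 b)
              _ = π b := mul_one _
          · exact ⟨b₀, Finset.mem_univ _, by
              have := mul_lt_mul_of_pos_left (sigmoid_lt_one (θ b₀ - θ a)) hb₀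
              simpa using this⟩
      _ = 1 := hπ1
  -- R ∈ (0,1)
  have hR0 : 0 < R := by
    rw [hR_def]
    apply Finset.sum_pos' (fun a _ => mul_nonneg (hq0 a) (le_of_lt (hy0 a)))
    exact ⟨a₀, Finset.mem_univ _, mul_pos ha₀ (hy0 a₀)⟩
  have hR1 : R < 1 := by
    rw [hR_def]
    calc ∑ a, q a * y a < ∑ a, q a := by
          apply Finset.sum_lt_sum
          · intro a _
            calc q a * y a ≤ q a * 1 :=
                  mul_le_mul_of_nonneg_left (le_of_lt (hy1 a)) (hq0 a)
              _ = q a := mul_one _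
          · exact ⟨a₀, Finset.mem_univ _, by
              have := mul_lt_mul_of_pos_left (hy1 a₀) ha₀
              simpa using this⟩
      _ = 1 := hq1
  -- derivative of F
  have hF' : ∀ t, HasDerivAt F (G t - R) t := by
    intro t
    have hFeq : F = fun t => ∑ a, q a *
        (Real.log (1 + Real.exp (θ a - t)) + (1 - y a) * (t - θ a)) := by
      funext t
      apply Finset.sum_congr rfl
      intro a _
      rw [bce_sigmoid]
      congr 2
      rw [neg_sub]
    rw [hFeq]
    have h : HasDerivAt (fun t => ∑ a, q a *
        (Real.log (1 + Real.exp (θ a - t)) + (1 - y a) * (t - θ a)))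
        (∑ a, q a * ((sigmoid (t - θ a) - 1) + (1 - y a))) t := by
      apply HasDerivAt.fun_sum
      intro a _
      apply HasDerivAt.const_mul
      apply (hasDerivAt_softplus (θ a) t).add
      have h1 : HasDerivAt (fun t : ℝ => t - θ a) 1 t := (hasDerivAt_id t).sub_const _
      simpa using h1.const_mul (1 - y a)
    convert h using 1
    rw [hG_def, hR_def]
    simp only
    rw [← Finset.sum_sub_distrib]
    apply Finset.sum_congr rfl
    intro a _
    ring
  -- G strictly monotone
  have hG_mono : StrictMono G := by
    intro s t hst
    apply Finset.sum_lt_sum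
    · intro a _
      exact mul_le_mul_of_nonneg_left
        (le_of_lt (sigmoid_strictMono (by linarith : s - θ a < t - θ a))) (hq0 a)
    · exact ⟨a₀, Finset.mem_univ _,
        mul_lt_mul_of_pos_left (sigmoid_strictMono (by linarith : s - θ a₀ < t - θ a₀)) ha₀⟩
  -- a root ⇒ strict global minimum
  have hF_cont : Continuous F := by
    have : Differentiable ℝ F := fun t => (hF' t).differentiableAt
    exact this.continuous
  have hmin_of_root : ∀ t, G t = R → ∀ s, s ≠ t → F t < F s := by
    intro t ht s hst
    rcases lt_or_gt_of_ne hst with h | h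
    · obtain ⟨c, hc, hceq⟩ := exists_hasDerivAt_eq_slope F (fun u => G u - R) h
        hF_cont.continuousOn (fun u _ => hF' u)
      have hGc : G c < R := by
        have := hG_mono hc.2
        linarith
      have hslope : (F t - F s) / (t - s) < 0 := by rw [← hceq]; linarith
      have htpos : 0 < t - s := by linarith
      have := mul_neg_of_neg_of_pos hslope htpos
      rw [div_mul_cancel₀ _ (ne_of_gt htpos)] at this
      linarith
    · obtain ⟨c, hc, hceq⟩ := exists_hasDerivAt_eq_slope F (fun u => G u - R) h
        hF_cont.continuousOn (fun u _ => hF' u)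
      have hGc : R < G c := by
        have := hG_mono hc.1
        linarith
      have hslope : 0 < (F s - F t) / (s - t) := by rw [← hceq]; linarith
      have htpos : 0 < s - t := by linarith
      have := mul_pos hslope htpos
      rw [div_mul_cancel₀ _ (ne_of_gt htpos)] at this
      linarith
  have hmin_of_root' : ∀ t, G t = R → ∀ s, F t ≤ F s := by
    intro t ht s
    rcases eq_or_ne s t with rfl | h
    · exact le_refl _
    · exact le_of_lt (hmin_of_root t ht s h)
  -- minimum ⇒ root
  have hroot_of_min : ∀ t, (∀ s, F t ≤ F s) → G t = R := by
    intro t h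
    have hloc : IsLocalMin F t := Filter.Eventually.of_forall h
    have h0 : deriv F t = 0 := hloc.deriv_eq_zero
    have h1 : deriv F t = G t - R := (hF' t).deriv
    linarith [h0, h1.symm.trans h0]
  -- existence of a root via IVT
  have hGtop : Filter.Tendsto G Filter.atTop (nhds 1) := by
    rw [hG_def, ← hq1]
    apply tendsto_finset_sum
    intro a _
    have h1 : Filter.Tendsto (fun t : ℝ => t - θ a) Filter.atTop Filter.atTop :=
      Filter.tendsto_atTop_add_const_right _ (-θ a) Filter.tendsto_id |>.congr
        (fun t => by simp [sub_eq_add_neg])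
    have := (sigmoid_tendsto_atTop.comp h1).const_mul (q a)
    simpa using this
  have hGbot : Filter.Tendsto G Filter.atBot (nhds 0) := by
    have h0 : (0:ℝ) = ∑ a : Fin M, q a * 0 := by simp
    rw [hG_def, h0]
    apply tendsto_finset_sum
    intro a _
    have h1 : Filter.Tendsto (fun t : ℝ => t - θ a) Filter.atBot Filter.atBot :=
      Filter.tendsto_atBot_add_const_right _ (-θ a) Filter.tendsto_id |>.congr
        (fun t => by simp [sub_eq_add_neg])
    exact (sigmoid_tendsto_atBot.comp h1).const_mul (q a)
  obtain ⟨t₂, ht₂⟩ : ∃ t₂, R < G t₂ :=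
    (hGtop.eventually (eventually_gt_nhds hR1)).exists
  obtain ⟨t₁, ht₁⟩ : ∃ t₁, G t₁ < R := by
    have := hGbot.eventually (eventually_lt_nhds hR0)
    exact this.exists
  have h12 : t₁ < t₂ := by
    by_contra h
    push_neg at h
    have := hG_mono.le_iff_le.mpr h
    linarith
  have hG_cont : Continuous G := by
    rw [hG_def]
    apply continuous_finset_sum
    intro a _
    exact continuous_const.mul (continuous_sigmoid'.comp (continuous_id.sub continuous_const))
  obtain ⟨t₀, _, hGt₀⟩ : ∃ t₀ ∈ Set.Icc t₁ t₂, G t₀ = R := by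
    have := intermediate_value_Icc (le_of_lt h12) hG_cont.continuousOn
    have hmem : R ∈ Set.Icc (G t₁) (G t₂) := ⟨le_of_lt ht₁, le_of_lt ht₂⟩
    obtain ⟨t₀, ht₀mem, ht₀eq⟩ := this hmem
    exact ⟨t₀, ht₀mem, ht₀eq⟩
  -- assemble
  constructor
  · refine ⟨t₀, ?_, ?_⟩
    · intro t
      exact hmin_of_root' t₀ hGt₀ t
    · intro t' ht'
      have : G t' = R := hroot_of_min t' ht'
      exact hG_mono.injective (this.trans hGt₀.symm)
  · intro t
    rw [hR_eq]
    constructor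
    · exact hroot_of_min t
    · exact fun h => hmin_of_root' t h
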